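/- arXiv:0911.0824 — 4 statements merged into one kernel-verified Lean document; each statement's English description precedes it below -/
import Mathlib

section
/- Let W be a Coxeter group with diagram automorphism θ such that θ commutes with no reflection of W and every element of W(θ) = {u : θ(u) = u⁻¹} has even length. Then for every u ∈ W(θ) and every simple reflection sᵢ, the length of sᵢ·u·θ(sᵢ) equals ℓ(u) + 2 or ℓ(u) − 2; in particular sᵢ·u·θ(sᵢ) ≠ u. -/
open scoped Classical

namespace StmtAux

open CoxeterSystem List Finset

variable {B W : Type*} [Group W] {M : CoxeterMatrix B} (cs : CoxeterSystem M W)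

local prefix:100 "s" => cs.simple
local prefix:100 "π" => cs.wordProd
local prefix:100 "ℓ" => cs.length

/-- The sign permutation attached to a simple reflection. -/
noncomputable def eta (i : B) : Equiv.Perm (W × ZMod 2) :=
  Function.Involutive.toPerm
    (fun p => (s i * p.1 * s i, p.2 + if p.1 = s i then 1 else 0))
    (by
      rintro ⟨t, z⟩
      have hcond : (s i * t * s i = s i) ↔ t = s i := by
        constructor
        · intro h
          have h2 : s i * (t * s i) = s i * 1 := by
            rw [mul_one, ← mul_assoc]; exact h
          have h3 : t * s i = 1 := mul_left_cancel h2
          rw [eq_inv_of_mul_eq_one_left h3, cs.inv_simple]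
        · rintro rfl
          rw [cs.simple_mul_simple_self, one_mul]
      have h1 : s i * (s i * t * s i) * s i = t := by
        simp [mul_assoc, cs.simple_mul_simple_self, cs.simple_mul_simple_cancel_left]
      have h11 : (1 : ZMod 2) + 1 = 0 := by decide
      simp only [h1, hcond]
      by_cases h : t = s i
      · simp [h, add_assoc, h11]
      · simp [h])

lemma eta_apply (i : B) (p : W × ZMod 2) :
    eta cs i p = (s i * p.1 * s i, p.2 + if p.1 = s i then 1 else 0) := rfl

lemma conj_eq_iff (p x t : W) : p * t * p⁻¹ = x ↔ t = p⁻¹ * x * p := by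
  constructor
  · rintro rfl; group
  · rintro rfl; group

lemma eta_mul_pow (i j : B) (n : ℕ) (t : W) (z : ZMod 2) :
    ((eta cs i * eta cs j) ^ n) (t, z) =
      ((s i * s j) ^ n * t * ((s i * s j) ^ n)⁻¹,
        z + ∑ k ∈ Finset.range n,
          ((if (s i * s j) ^ k * t * ((s i * s j) ^ k)⁻¹ = s j then (1 : ZMod 2) else 0) +
           (if (s i * s j) ^ k * t * ((s i * s j) ^ k)⁻¹ = s j * s i * s j then (1 : ZMod 2) else 0))) := by
  induction n generalizing t z with
  | zero => simp
  | succ n ih =>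
    rw [pow_succ, Equiv.Perm.mul_apply]
    have hF : (eta cs i * eta cs j) (t, z) =
        ((s i * s j) * t * ((s i * s j))⁻¹,
          z + ((if t = s j then (1 : ZMod 2) else 0) +
               (if t = s j * s i * s j then (1 : ZMod 2) else 0))) := by
      rw [Equiv.Perm.mul_apply, eta_apply, eta_apply, Prod.mk.injEq]
      refine ⟨?_, ?_⟩
      · dsimp only
        rw [mul_inv_rev, cs.inv_simple, cs.inv_simple]
        group
      · dsimp only
        have hc : (s j * t * s j = s i) ↔ (t = s j * s i * s j) := by
          have h0 : s j * t * s j = s j * t * (s j)⁻¹ := by rw [cs.inv_simple]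
          rw [h0, conj_eq_iff, cs.inv_simple]
        rw [if_congr hc rfl rfl]
        ring
    rw [hF, ih, Prod.mk.injEq]
    refine ⟨?_, ?_⟩
    · generalize s i * s j = p
      group
    · rw [Finset.sum_range_succ']
      have hterm : ∀ k : ℕ,
          ((if (s i * s j) ^ k * ((s i * s j) * t * (s i * s j)⁻¹) * ((s i * s j) ^ k)⁻¹ = s j then (1 : ZMod 2) else 0) +
           (if (s i * s j) ^ k * ((s i * s j) * t * (s i * s j)⁻¹) * ((s i * s j) ^ k)⁻¹ = s j * s i * s j then (1 : ZMod 2) else 0))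
          =
          ((if (s i * s j) ^ (k + 1) * t * ((s i * s j) ^ (k + 1))⁻¹ = s j then (1 : ZMod 2) else 0) +
           (if (s i * s j) ^ (k + 1) * t * ((s i * s j) ^ (k + 1))⁻¹ = s j * s i * s j then (1 : ZMod 2) else 0)) := by
        intro k
        have : (s i * s j) ^ k * ((s i * s j) * t * (s i * s j)⁻¹) * ((s i * s j) ^ k)⁻¹
            = (s i * s j) ^ (k + 1) * t * ((s i * s j) ^ (k + 1))⁻¹ := by
          generalize s i * s j = p
          group
        rw [this]
      simp only [hterm]
      have h0 : (s i * s j) ^ 0 * t * ((s i * s j) ^ 0)⁻¹ = t := by group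
      rw [h0]
      ring

lemma sum_even_odd {Mo : Type*} [AddCommMonoid Mo] (f : ℕ → Mo) (m : ℕ) :
    (∑ k ∈ Finset.range m, (f (2 * k) + f (2 * k + 1))) = ∑ r ∈ Finset.range (2 * m), f r := by
  induction m with
  | zero => simp
  | succ m ih =>
    rw [Finset.sum_range_succ, ih, Nat.mul_succ,
      show 2 * m + 2 = (2 * m + 1) + 1 from rfl, Finset.sum_range_succ, Finset.sum_range_succ,
      add_assoc]

lemma eta_liftable : M.IsLiftable (fun i => eta cs i) := by
  intro i j
  show (eta cs i * eta cs j) ^ M i j = 1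
  refine Equiv.ext fun q => ?_
  obtain ⟨t, z⟩ := q
  rw [eta_mul_pow]
  have hp : (s i * s j) ^ M i j = 1 := cs.simple_mul_simple_pow i j
  have hq : ∀ k : ℕ, ((s i * s j)⁻¹) ^ k * s j = s j * (s i * s j) ^ k := by
    intro k
    induction k with
    | zero => simp
    | succ k ihk =>
      have hbase : (s i * s j)⁻¹ * s j = s j * (s i * s j) := by
        rw [mul_inv_rev, cs.inv_simple, cs.inv_simple]
        group
      calc ((s i * s j)⁻¹) ^ (k + 1) * s j
          = (s i * s j)⁻¹ * (((s i * s j)⁻¹) ^ k * s j) := by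
            rw [pow_succ', mul_assoc]
        _ = (s i * s j)⁻¹ * (s j * (s i * s j) ^ k) := by rw [ihk]
        _ = ((s i * s j)⁻¹ * s j) * (s i * s j) ^ k := by rw [mul_assoc]
        _ = s j * (s i * s j) ^ (k + 1) := by
            rw [hbase, mul_assoc, ← pow_succ']
  have hconj1 : ∀ k : ℕ,
      ((s i * s j) ^ k * t * ((s i * s j) ^ k)⁻¹ = s j) ↔ (t = s j * (s i * s j) ^ (2 * k)) := by
    intro k
    have he : ((s i * s j) ^ k)⁻¹ * s j * (s i * s j) ^ k = s j * (s i * s j) ^ (2 * k) := by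
      rw [← inv_pow, hq k, mul_assoc, ← pow_add, two_mul]
    rw [conj_eq_iff, he]
  have hconj2 : ∀ k : ℕ,
      ((s i * s j) ^ k * t * ((s i * s j) ^ k)⁻¹ = s j * s i * s j) ↔
        (t = s j * (s i * s j) ^ (2 * k + 1)) := by
    intro k
    have he : ((s i * s j) ^ k)⁻¹ * (s j * s i * s j) * (s i * s j) ^ k
        = s j * (s i * s j) ^ (2 * k + 1) := by
      have h1 : s j * s i * s j = s j * (s i * s j) := by rw [mul_assoc]
      rw [h1, ← mul_assoc, ← inv_pow, hq k, mul_assoc, mul_assoc, ← pow_succ', ← pow_add, two_mul]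
      rw [show k + (k + 1) = k + k + 1 from by omega]
    rw [conj_eq_iff, he]
  have hsum : (∑ k ∈ Finset.range (M i j),
      ((if (s i * s j) ^ k * t * ((s i * s j) ^ k)⁻¹ = s j then (1 : ZMod 2) else 0) +
       (if (s i * s j) ^ k * t * ((s i * s j) ^ k)⁻¹ = s j * s i * s j then (1 : ZMod 2) else 0)))
      = 0 := by
    have hrw : ∀ k ∈ Finset.range (M i j),
        ((if (s i * s j) ^ k * t * ((s i * s j) ^ k)⁻¹ = s j then (1 : ZMod 2) else 0) +
         (if (s i * s j) ^ k * t * ((s i * s j) ^ k)⁻¹ = s j * s i * s j then (1 : ZMod 2) else 0))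
        = ((if t = s j * (s i * s j) ^ (2 * k) then (1 : ZMod 2) else 0) +
           (if t = s j * (s i * s j) ^ (2 * k + 1) then (1 : ZMod 2) else 0)) := by
      intro k _
      rw [if_congr (hconj1 k) rfl rfl, if_congr (hconj2 k) rfl rfl]
    rw [Finset.sum_congr rfl hrw,
      sum_even_odd (fun r => if t = s j * (s i * s j) ^ r then (1 : ZMod 2) else 0) (M i j),
      two_mul, Finset.sum_range_add]
    have hshift : ∀ r : ℕ, (if t = s j * (s i * s j) ^ (M i j + r) then (1 : ZMod 2) else 0)
        = (if t = s j * (s i * s j) ^ r then (1 : ZMod 2) else 0) := by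
      intro r
      rw [pow_add, hp, one_mul]
    simp only [hshift]
    have h2 : ∀ x : ZMod 2, x + x = 0 := by decide
    exact h2 _
  rw [hsum, hp]
  simp

/-- The sign representation of `W` on `W × ZMod 2`. -/
noncomputable def phi : W →* Equiv.Perm (W × ZMod 2) :=
  cs.lift ⟨fun i => eta cs i, eta_liftable cs⟩

lemma phi_simple (i : B) : phi cs (s i) = eta cs i :=
  cs.lift_apply_simple (eta_liftable cs) i

/-- Indicator sum: the parity of the number of occurrences of `t` in `l`. -/
noncomputable def ind (t : W) (l : List W) : ZMod 2 :=
  (l.map fun r => if r = t then (1 : ZMod 2) else 0).sum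

lemma ind_cons (t a : W) (l : List W) :
    ind t (a :: l) = (if a = t then (1 : ZMod 2) else 0) + ind t l := by
  simp [ind]

lemma mem_of_ind_ne_zero {t : W} {l : List W} (h : ind t l ≠ 0) : t ∈ l := by
  by_contra hm
  apply h
  apply List.sum_eq_zero
  intro x hx
  obtain ⟨r, hr, rfl⟩ := List.mem_map.mp hx
  have : r ≠ t := fun h' => hm (h' ▸ hr)
  simp [this]

lemma phi_wordProd (ω : List B) (t : W) (z : ZMod 2) :
    phi cs (π ω) (t, z) = (π ω * t * (π ω)⁻¹, z + ind t (cs.rightInvSeq ω)) := by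
  induction ω generalizing t z with
  | nil => simp [ind, CoxeterSystem.rightInvSeq]
  | cons i ω ih =>
    rw [cs.wordProd_cons, map_mul, Equiv.Perm.mul_apply, ih, phi_simple, eta_apply]
    show ((s i * (π ω * t * (π ω)⁻¹) * s i), _) = _
    rw [Prod.mk.injEq]
    refine ⟨?_, ?_⟩
    · rw [mul_inv_rev, cs.inv_simple]
      group
    · show (z + ind t (cs.rightInvSeq ω)) + _ = z + ind t (cs.rightInvSeq (i :: ω))
      have hris : cs.rightInvSeq (i :: ω) = ((π ω)⁻¹ * s i * π ω) :: cs.rightInvSeq ω := rfl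
      rw [hris, ind_cons]
      have hc : (π ω * t * (π ω)⁻¹ = s i) ↔ ((π ω)⁻¹ * s i * π ω = t) := by
        rw [conj_eq_iff]
        exact eq_comm
      rw [if_congr hc rfl rfl]
      ring

/-- The `ZMod 2`-valued inversion cocycle. -/
noncomputable def invSign (w t : W) : ZMod 2 := (phi cs w (t, 0)).2

lemma phi_apply (w t : W) (z : ZMod 2) :
    phi cs w (t, z) = (w * t * w⁻¹, z + invSign cs w t) := by
  obtain ⟨ω, rfl⟩ := cs.wordProd_surjective w
  rw [phi_wordProd, invSign, phi_wordProd, zero_add]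

lemma invSign_eq_ind (ω : List B) (t : W) :
    invSign cs (π ω) t = ind t (cs.rightInvSeq ω) := by
  rw [invSign, phi_wordProd, zero_add]

lemma mem_rightInvSeq_of_invSign {ω : List B} {t : W} (h : invSign cs (π ω) t = 1) :
    t ∈ cs.rightInvSeq ω := by
  apply mem_of_ind_ne_zero
  rw [← invSign_eq_ind, h]
  decide

lemma isRightInversion_of_invSign {w t : W} (ht : cs.IsReflection t)
    (h : invSign cs w t = 1) : cs.IsRightInversion w t := by
  obtain ⟨ω, hred, hw⟩ := cs.exists_reduced_word' w
  subst hw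
  exact cs.isRightInversion_of_mem_rightInvSeq hred (mem_rightInvSeq_of_invSign cs h)

lemma phi_reflection {t : W} (ht : cs.IsReflection t) (z : ZMod 2) :
    phi cs t (t, z) = (t, z + 1) := by
  obtain ⟨v, j, rfl⟩ := ht
  have hvt : v⁻¹ * (v * s j * v⁻¹) * (v⁻¹)⁻¹ = s j := by group
  have hsum : invSign cs v (s j) + invSign cs v⁻¹ (v * s j * v⁻¹) = 0 := by
    have h1 : phi cs v⁻¹ (phi cs v ((s j : W), (0 : ZMod 2))) = ((s j : W), (0 : ZMod 2)) := by
      rw [← Equiv.Perm.mul_apply, ← map_mul, inv_mul_cancel, map_one, Equiv.Perm.one_apply]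
    rw [phi_apply cs v (s j) 0, zero_add, phi_apply cs v⁻¹, hvt] at h1
    have h2 := congrArg Prod.snd h1
    simpa using h2
  rw [map_mul, map_mul, Equiv.Perm.mul_apply, Equiv.Perm.mul_apply]
  rw [phi_apply cs v⁻¹, hvt, phi_simple, eta_apply]
  dsimp only
  rw [if_pos rfl]
  rw [show s j * s j * s j = s j from by rw [cs.simple_mul_simple_self, one_mul]]
  rw [phi_apply]
  rw [Prod.mk.injEq]
  refine ⟨rfl, ?_⟩
  linear_combination hsum

lemma invSign_mul_reflection {w t : W} (ht : cs.IsReflection t) :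
    invSign cs (w * t) t = invSign cs w t + 1 := by
  have h1 : phi cs (w * t) (t, (0 : ZMod 2)) = (w * t * w⁻¹, (0 + 1) + invSign cs w t) := by
    rw [map_mul, Equiv.Perm.mul_apply, phi_reflection cs ht, phi_apply]
  rw [invSign, h1]
  dsimp only
  ring

lemma isRightInversion_iff_invSign {w t : W} (ht : cs.IsReflection t) :
    cs.IsRightInversion w t ↔ invSign cs w t = 1 := by
  constructor
  · intro hinv
    by_contra h0
    have hzero : invSign cs w t = 0 := by
      have h2 : ∀ x : ZMod 2, x = 0 ∨ x = 1 := by decide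
      rcases h2 (invSign cs w t) with h' | h'
      · exact h'
      · exact absurd h' h0
    have h1 : invSign cs (w * t) t = 1 := by
      rw [invSign_mul_reflection cs ht, hzero, zero_add]
    have h2 := (isRightInversion_of_invSign cs ht h1).2
    have h3 : w * t * t = w := by rw [mul_assoc, ht.mul_self, mul_one]
    rw [h3] at h2
    have h4 := hinv.2
    omega
  · exact isRightInversion_of_invSign cs ht

lemma mem_rightInvSeq_of_isRightInversion {ω : List B} {t : W}
    (h : cs.IsRightInversion (π ω) t) : t ∈ cs.rightInvSeq ω :=
  mem_rightInvSeq_of_invSign cs ((isRightInversion_iff_invSign cs h.1).mp h)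

lemma mem_leftInvSeq_of_isLeftInversion {ω : List B} {t : W}
    (h : cs.IsLeftInversion (π ω) t) : t ∈ cs.leftInvSeq ω := by
  have h' : cs.IsRightInversion (π ω.reverse) t := by
    rw [cs.wordProd_reverse]
    exact cs.isRightInversion_inv_iff.mpr h
  have hmem := mem_rightInvSeq_of_isRightInversion cs h'
  rw [cs.rightInvSeq_reverse] at hmem
  exact (List.mem_reverse).mp hmem

/-- The key exchange-type lemma. -/
lemma key {w : W} (i j : B) (h1 : ℓ (s i * w) = ℓ w + 1) (h2 : ℓ (w * s j) = ℓ w + 1)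
    (h3 : ℓ (s i * (w * s j)) < ℓ (w * s j)) : s i * w = w * s j := by
  obtain ⟨ω, hred, hw⟩ := cs.exists_reduced_word' w
  subst hw
  have hred2 : cs.IsReduced (ω.concat j) := by
    rw [CoxeterSystem.IsReduced, cs.wordProd_concat, List.length_concat, h2, hred]
  have hLI : cs.IsLeftInversion (π (ω.concat j)) (s i) := by
    refine ⟨cs.isReflection_simple i, ?_⟩
    rw [cs.wordProd_concat]
    exact h3
  have hmem := mem_leftInvSeq_of_isLeftInversion cs hLI
  rw [cs.leftInvSeq_concat] at hmem
  rw [List.concat_eq_append, List.mem_append, List.mem_singleton] at hmem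
  rcases hmem with hmem | hmem
  · exfalso
    have := (cs.isLeftInversion_of_mem_leftInvSeq hred hmem).2
    omega
  · rw [hmem]
    group

lemma theta_wordProd (θ : W ≃* W) (σ : B → B) (hθ : ∀ i : B, θ (s i) = s (σ i)) :
    ∀ ω : List B, θ (π ω) = π (ω.map σ) := by
  intro ω
  induction ω with
  | nil => simp
  | cons i ω ih =>
    rw [cs.wordProd_cons, map_mul, hθ, ih, List.map_cons, cs.wordProd_cons]

lemma length_map_le (θ : W ≃* W) (σ : B → B) (hθ : ∀ i : B, θ (s i) = s (σ i)) (w : W) :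
    ℓ (θ w) ≤ ℓ w := by
  obtain ⟨ω, hlen, hw⟩ := cs.exists_reduced_word w
  subst hw
  rw [theta_wordProd cs θ σ hθ]
  calc ℓ (π (ω.map σ)) ≤ (ω.map σ).length := cs.length_wordProd_le _
    _ = ω.length := by simp
    _ = ℓ (π ω) := by rw [CoxeterSystem.IsReduced] at hlen; exact hlen.symm

lemma length_map (θ : W ≃* W) (σ : Equiv.Perm B) (hθ : ∀ i : B, θ (s i) = s (σ i)) (w : W) :
    ℓ (θ w) = ℓ w := by
  refine le_antisymm (length_map_le cs θ σ hθ w) ?_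
  have hsymm : ∀ i : B, θ.symm (s i) = s (σ.symm i) := by
    intro i
    apply θ.injective
    rw [MulEquiv.apply_symm_apply, hθ, Equiv.apply_symm_apply]
  have h1 := length_map_le cs θ.symm σ.symm hsymm (θ w)
  rwa [MulEquiv.symm_apply_apply] at h1

end StmtAux

/-- If `θ` is a diagram automorphism of a Coxeter group `W` commuting with no reflection,
and every twisted involution has even length, then for every twisted involution `u` and
simple reflection `sᵢ` the length of `sᵢ * u * θ(sᵢ)` is `ℓ(u) + 2` or `ℓ(u) - 2`;
in particular `sᵢ * u * θ(sᵢ) ≠ u`. -/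
theorem stmt1 {B W : Type*} [Group W] {M : CoxeterMatrix B} (cs : CoxeterSystem M W)
    (θ : W ≃* W) (π : Equiv.Perm B)
    (hθS : ∀ i : B, θ (cs.simple i) = cs.simple (π i))
    (hrefl : ∀ r : W, cs.IsReflection r → θ r ≠ r)
    (heven : ∀ u : W, θ u = u⁻¹ → Even (cs.length u))
    (u : W) (hu : θ u = u⁻¹) (i : B) :
    (cs.length (cs.simple i * u * θ (cs.simple i)) = cs.length u + 2 ∨
      cs.length (cs.simple i * u * θ (cs.simple i)) + 2 = cs.length u) ∧
    cs.simple i * u * θ (cs.simple i) ≠ u := by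
  classical
  rw [hθS i]
  have hne : cs.simple i * u * cs.simple (π i) ≠ u := by
    intro h
    have htj : cs.simple (π i) = u⁻¹ * cs.simple i * u := by
      have htj0 : cs.simple (π i) = (cs.simple i * u)⁻¹ * u :=
        mul_left_cancel (a := cs.simple i * u) (by rw [h]; group)
      rw [htj0, mul_inv_rev, cs.inv_simple]
    have h5 : θ (cs.simple i * u) = (cs.simple i * u)⁻¹ := by
      rw [map_mul, hu, hθS i, mul_inv_rev, cs.inv_simple, htj]
      group
    obtain ⟨c, hc⟩ := heven _ h5
    obtain ⟨d, hd⟩ := heven u hu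
    rcases cs.length_simple_mul u i with hsu | hsu <;> omega
  refine ⟨?_, hne⟩
  have hut : cs.length (u * cs.simple (π i)) = cs.length (cs.simple i * u) := by
    have he : u * cs.simple (π i) = (θ (cs.simple i * u))⁻¹ := by
      rw [map_mul, hu, hθS i, mul_inv_rev, inv_inv, cs.inv_simple]
    rw [he, cs.length_inv, StmtAux.length_map cs θ π hθS]
  rcases cs.length_simple_mul u i with hsu | hsu
  · rcases cs.length_mul_simple (cs.simple i * u) (π i) with hv | hv
    · left; omega
    · exfalso
      have h2 : cs.length (u * cs.simple (π i)) = cs.length u + 1 := by omega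
      have h3 : cs.length (cs.simple i * (u * cs.simple (π i))) <
          cs.length (u * cs.simple (π i)) := by
        rw [← mul_assoc]; omega
      have hk := StmtAux.key cs i (π i) hsu h2 h3
      apply hne
      rw [hk, cs.simple_mul_simple_cancel_right]
  · rcases cs.length_mul_simple (cs.simple i * u) (π i) with hv | hv
    · exfalso
      have h1 : cs.length (cs.simple i * (cs.simple i * u)) =
          cs.length (cs.simple i * u) + 1 := by
        rw [cs.simple_mul_simple_cancel_left]; omega
      have h3 : cs.length (cs.simple i * (cs.simple i * u * cs.simple (π i))) <
          cs.length (cs.simple i * u * cs.simple (π i)) := by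
        rw [← mul_assoc, cs.simple_mul_simple_cancel_left]; omega
      have hk := StmtAux.key cs i (π i) h1 hv h3
      rw [cs.simple_mul_simple_cancel_left] at hk
      exact hne hk.symm
    · right; omega
end

section
/- Let P be a projective 3-space PG(3, k) over a field k with |k| ≥ 4, and fix a line l. Consider the graph Ξ whose vertices are the points of P not on l, with two points adjacent iff the line joining them does not meet l. Then Ξ is connected of diameter at most 2. -/
set_option synthInstance.maxHeartbeats 1000000
set_option maxHeartbeats 1000000

private lemma aux_inf_bot {k : Type*} [Field k] {L : Submodule k (Fin 4 → k)}
    {u w : Fin 4 → k} (hu : u ∉ L) (hw : w ∉ (k ∙ u) ⊔ L) :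
    ((k ∙ u) ⊔ (k ∙ w)) ⊓ L = ⊥ := by
  rw [Submodule.eq_bot_iff]
  rintro x ⟨hx1, hx2⟩
  obtain ⟨y, hy, z, hz, rfl⟩ := Submodule.mem_sup.mp hx1
  obtain ⟨a, rfl⟩ := Submodule.mem_span_singleton.mp hy
  obtain ⟨b, rfl⟩ := Submodule.mem_span_singleton.mp hz
  by_cases hb : b = 0
  · subst hb
    simp only [zero_smul, add_zero] at hx2 ⊢
    rcases eq_or_ne a 0 with ha | ha
    · simp [ha]
    · exact absurd (by simpa [ha] using L.smul_mem a⁻¹ hx2) hu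
  · exfalso
    apply hw
    have h1 : a • u + b • w ∈ (k ∙ u) ⊔ L := Submodule.mem_sup_right hx2
    have h2 : a • u ∈ (k ∙ u) ⊔ L :=
      Submodule.mem_sup_left (Submodule.smul_mem _ a (Submodule.mem_span_singleton_self u))
    have h3 : b • w ∈ (k ∙ u) ⊔ L := by
      have := Submodule.sub_mem _ h1 h2; simpa using this
    have := Submodule.smul_mem _ b⁻¹ h3
    simpa [hb] using this

private lemma aux_ne_top {k : Type*} [Field k] {L : Submodule k (Fin 4 → k)}
    (hL : Module.finrank k L = 2) {u : Fin 4 → k} (hu : u ≠ 0) :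
    (k ∙ u) ⊔ L ≠ ⊤ := by
  intro h
  have h1 : Module.finrank k ((k ∙ u) ⊔ L : Submodule k (Fin 4 → k))
      + Module.finrank k ((k ∙ u) ⊓ L : Submodule k (Fin 4 → k))
      = Module.finrank k (k ∙ u) + Module.finrank k L :=
    Submodule.finrank_sup_add_finrank_inf_eq _ _
  have h2 : Module.finrank k (k ∙ u) = 1 := finrank_span_singleton hu
  have h3 : Module.finrank k ((k ∙ u) ⊔ L : Submodule k (Fin 4 → k)) = 4 := by
    rw [h, finrank_top]
    simp [Module.finrank_fin_fun]
  omega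

private lemma aux_exists {k : Type*} [Field k] {M : Type*} [AddCommGroup M] [Module k M]
    (A B : Submodule k M) (hA : A ≠ ⊤) (hB : B ≠ ⊤) : ∃ w, w ∉ A ∧ w ∉ B := by
  obtain ⟨a, ha⟩ : ∃ a, a ∉ A := by
    by_contra h; push_neg at h; exact hA (Submodule.eq_top_iff'.mpr h)
  obtain ⟨b, hb⟩ : ∃ b, b ∉ B := by
    by_contra h; push_neg at h; exact hB (Submodule.eq_top_iff'.mpr h)
  by_cases hab : a ∈ B
  · by_cases hba : b ∈ A
    · refine ⟨a + b, fun h => ha ?_, fun h => hb ?_⟩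
      · simpa using A.sub_mem h hba
      · simpa using B.sub_mem h hab
    · exact ⟨b, hba, hb⟩
  · exact ⟨a, ha, hab⟩

/-- In `PG(3,k)` with `|k| ≥ 4`, fix a line `L`.  The graph on the points not on `L`, with
two points adjacent iff their joining line misses `L`, is connected of diameter at most 2. -/
theorem stmt13 {k : Type*} [Field k] (hk : 4 ≤ Cardinal.mk k)
    (L : Submodule k (Fin 4 → k)) (hL : Module.finrank k L = 2) :
    let Adj : Projectivization k (Fin 4 → k) → Projectivization k (Fin 4 → k) → Prop :=
      fun p q => p ≠ q ∧ (p.submodule ⊔ q.submodule) ⊓ L = ⊥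
    ∀ p q : Projectivization k (Fin 4 → k),
      ¬ p.submodule ≤ L → ¬ q.submodule ≤ L →
      p = q ∨ Adj p q ∨ ∃ r, Adj p r ∧ Adj r q := by
  intro Adj p q hp hq
  rcases eq_or_ne p q with hpq | hpq
  · exact Or.inl hpq
  right; right
  have hup : p.rep ∉ L := by
    intro h
    apply hp
    rw [Projectivization.submodule_eq]
    exact (Submodule.span_singleton_le_iff_mem _ _).mpr h
  have huq : q.rep ∉ L := by
    intro h
    apply hq
    rw [Projectivization.submodule_eq]
    exact (Submodule.span_singleton_le_iff_mem _ _).mpr h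
  obtain ⟨w, hwA, hwB⟩ := aux_exists ((k ∙ p.rep) ⊔ L) ((k ∙ q.rep) ⊔ L)
    (aux_ne_top hL p.rep_nonzero) (aux_ne_top hL q.rep_nonzero)
  have hw0 : w ≠ 0 := fun h => hwA (by simp [h])
  refine ⟨Projectivization.mk k w hw0, ⟨?_, ?_⟩, ?_, ?_⟩
  · intro h
    apply hwA
    have : w ∈ (Projectivization.mk k w hw0).submodule := by
      rw [Projectivization.submodule_mk]; exact Submodule.mem_span_singleton_self w
    rw [← h, Projectivization.submodule_eq] at this
    exact Submodule.mem_sup_left this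
  · rw [Projectivization.submodule_eq, Projectivization.submodule_mk]
    exact aux_inf_bot hup hwA
  · intro h
    apply hwB
    have : w ∈ (Projectivization.mk k w hw0).submodule := by
      rw [Projectivization.submodule_mk]; exact Submodule.mem_span_singleton_self w
    rw [h, Projectivization.submodule_eq] at this
    exact Submodule.mem_sup_left this
  · rw [Projectivization.submodule_mk, Projectivization.submodule_eq, sup_comm]
    exact aux_inf_bot huq hwB
end

section
/- Let V be a 4-dimensional vector space over a field k with |k| ≥ 4, and let φ be an involutory semilinear map on V (with respect to a field involution) inducing a fixed-point-free involution of the projective space PG(V). Consider the graph on all points of PG(V), where points p, q are adjacent iff p ≠ q and the line ⟨p,q⟩ is not φ-invariant. Then this graph is connected of diameter at most 2: any two non-adjacent distinct points p₁, p₂ are both adjacent to any point not on the φ-invariant line ⟨p₁, p₂⟩. -/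
set_option synthInstance.maxHeartbeats 1000000
set_option maxHeartbeats 1000000

/-- Key lemma: if `L` is a `φ`-invariant subspace containing `p` and `r` is off `L`,
then the line `⟨p,r⟩` is not `φ`-invariant (given `φ` has no projective fixed points). -/
theorem stmt14_key {k V : Type*} [Field k] [AddCommGroup V] [Module k V]
    (φ : V → V)
    (hfpf : ∀ v : V, v ≠ 0 → ¬ ∃ c : k, φ v = c • v)
    (L : Submodule k V) (hL : ∀ v ∈ L, φ v ∈ L)
    (p r : Projectivization k V) (hp : p.submodule ≤ L)
    (hr : ¬ r.submodule ≤ L) :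
    p ≠ r ∧ ¬ (∀ v ∈ p.submodule ⊔ r.submodule, φ v ∈ p.submodule ⊔ r.submodule) := by
  have hne : p ≠ r := by rintro rfl; exact hr hp
  refine ⟨hne, fun hBad => ?_⟩
  set u := p.rep with hu
  have hu0 : u ≠ 0 := p.rep_nonzero
  have hup : u ∈ p.submodule := by
    rw [p.submodule_eq]; exact Submodule.mem_span_singleton_self _
  have huL : u ∈ L := hp hup
  have hφu : φ u ∈ p.submodule ⊔ r.submodule :=
    hBad u (Submodule.mem_sup_left hup)
  obtain ⟨x, hx, y, hy, hxy⟩ := Submodule.mem_sup.mp hφu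
  rw [p.submodule_eq] at hx
  rw [r.submodule_eq] at hy
  obtain ⟨a, rfl⟩ := Submodule.mem_span_singleton.mp hx
  obtain ⟨b, rfl⟩ := Submodule.mem_span_singleton.mp hy
  by_cases hb : b = 0
  · refine hfpf u hu0 ⟨a, ?_⟩
    rw [← hxy, hb, zero_smul, add_zero]
  · apply hr
    rw [r.submodule_eq, Submodule.span_singleton_le_iff_mem]
    have hmem : b • r.rep ∈ L := by
      have h1 : φ u ∈ L := hL u huL
      have h2 : a • u ∈ L := L.smul_mem a huL
      have : φ u - a • u ∈ L := L.sub_mem h1 h2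
      rwa [← hxy, add_sub_cancel_left] at this
    have := L.smul_mem b⁻¹ hmem
    rwa [smul_smul, inv_mul_cancel₀ hb, one_smul] at this

/-- Let `V` be 4-dimensional over a field `k` with `|k| ≥ 4`, and `φ` an involutory
semilinear map on `V` inducing a fixed-point-free involution of `PG(V)`.  The graph on the
points of `PG(V)`, with `p ~ q` iff `p ≠ q` and the line `⟨p,q⟩` is not `φ`-invariant, is
connected of diameter at most 2; indeed any two non-adjacent distinct points are both
adjacent to every point off the (φ-invariant) line through them. -/
theorem stmt14 {k V : Type*} [Field k] [AddCommGroup V] [Module k V]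
    (hdim : Module.finrank k V = 4) (hk : 4 ≤ Cardinal.mk k)
    (α : k ≃+* k) (hα2 : ∀ x, α (α x) = x)
    (φ : V → V)
    (hadd : ∀ u v, φ (u + v) = φ u + φ v)
    (hsmul : ∀ (c : k) (v : V), φ (c • v) = α c • φ v)
    (hsq : ∃ c : k, c ≠ 0 ∧ ∀ v, φ (φ v) = c • v)
    (hfpf : ∀ v : V, v ≠ 0 → ¬ ∃ c : k, φ v = c • v) :
    let Bad : Submodule k V → Prop := fun L => ∀ v ∈ L, φ v ∈ L
    let Adj : Projectivization k V → Projectivization k V → Prop :=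
      fun p q => p ≠ q ∧ ¬ Bad (p.submodule ⊔ q.submodule)
    (∀ p q : Projectivization k V, p = q ∨ Adj p q ∨ ∃ r, Adj p r ∧ Adj r q) ∧
    (∀ p q : Projectivization k V, p ≠ q → ¬ Adj p q →
      ∀ r : Projectivization k V, ¬ r.submodule ≤ p.submodule ⊔ q.submodule →
        Adj p r ∧ Adj q r) := by
  intro Bad Adj
  haveI : FiniteDimensional k V :=
    FiniteDimensional.of_finrank_pos (by omega)
  have part2 : ∀ p q : Projectivization k V, p ≠ q → ¬ Adj p q →
      ∀ r : Projectivization k V, ¬ r.submodule ≤ p.submodule ⊔ q.submodule →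
        Adj p r ∧ Adj q r := by
    intro p q hpq hnadj r hr
    have hBadL : Bad (p.submodule ⊔ q.submodule) := by
      by_contra hB
      exact hnadj ⟨hpq, hB⟩
    constructor
    · exact stmt14_key φ hfpf _ hBadL p r le_sup_left hr
    · have := stmt14_key φ hfpf _ hBadL q r le_sup_right hr
      exact this
  refine ⟨?_, part2⟩
  intro p q
  by_cases hpq : p = q
  · exact Or.inl hpq
  by_cases hadj : Adj p q
  · exact Or.inr (Or.inl hadj)
  · refine Or.inr (Or.inr ?_)
    -- find a point off the line
    have hlt : Module.finrank k ↥(p.submodule ⊔ q.submodule) ≤ 2 := by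
      have h := Submodule.finrank_add_le_finrank_add_finrank p.submodule q.submodule
      rw [p.finrank_submodule, q.finrank_submodule] at h
      omega
    obtain ⟨v, hv⟩ : ∃ v : V, v ∉ p.submodule ⊔ q.submodule := by
      by_contra h
      push_neg at h
      have htop : p.submodule ⊔ q.submodule = ⊤ := Submodule.eq_top_iff'.mpr h
      rw [htop, finrank_top, hdim] at hlt
      omega
    have hv0 : v ≠ 0 := fun h => hv (h ▸ (p.submodule ⊔ q.submodule).zero_mem)
    set r := Projectivization.mk k v hv0 with hrdef
    have hrle : ¬ r.submodule ≤ p.submodule ⊔ q.submodule := by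
      rw [hrdef, Projectivization.submodule_mk, Submodule.span_singleton_le_iff_mem]
      exact hv
    obtain ⟨h1, h2⟩ := part2 p q hpq hadj r hrle
    refine ⟨r, h1, ?_⟩
    exact ⟨h2.1.symm, by rw [sup_comm]; exact h2.2⟩
end

section
/- Let k be a field, A = k[t,t⁻¹], and let ε₁ : SL_{2n}(A) → SL_{2n}(k) be evaluation at t = 1. With β and G^τ as above, ε₁(G^τ) is contained in the special orthogonal group SO⁺_{2n}(k) of the symmetric bilinear form with Gram matrix [[0,Iₙ],[Iₙ,0]]. -/
set_option synthInstance.maxHeartbeats 1000000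
set_option maxHeartbeats 1000000
open Matrix LaurentPolynomial

/-- Let `A = k[t,t⁻¹]` and `ε₁ : SL_{2n}(A) → SL_{2n}(k)` the evaluation `t ↦ 1`.  If
`g ∈ SL_{2n}(A)` preserves the σ-sesquilinear form `β` with Gram matrix
`B = [[0,Iₙ],[t·Iₙ,0]]` (i.e. `g ∈ G^τ`), then `ε₁(g)` lies in the special orthogonal
group `SO⁺_{2n}(k)` of the symmetric bilinear form `[[0,Iₙ],[Iₙ,0]]`. -/
theorem stmt16 {k : Type*} [Field k] (n : ℕ) (hn : 0 < n)
    (σ : LaurentPolynomial k →+* LaurentPolynomial k)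
    (hσC : ∀ x : k, σ (LaurentPolynomial.C x) = LaurentPolynomial.C x)
    (hσT : ∀ m : ℤ, σ (T m : LaurentPolynomial k) = T (-m))
    (ε : LaurentPolynomial k →+* k)
    (hεC : ∀ x : k, ε (LaurentPolynomial.C x) = x)
    (hεT : ε (T 1 : LaurentPolynomial k) = 1) :
    let B : Matrix (Fin n ⊕ Fin n) (Fin n ⊕ Fin n) (LaurentPolynomial k) :=
      Matrix.fromBlocks 0 1
        ((T 1 : LaurentPolynomial k) • (1 : Matrix (Fin n) (Fin n) (LaurentPolynomial k))) 0
    let β : (Fin n ⊕ Fin n → LaurentPolynomial k) →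
        (Fin n ⊕ Fin n → LaurentPolynomial k) → LaurentPolynomial k :=
      fun u v => ∑ i, ∑ j, u i * B i j * σ (v j)
    let J : Matrix (Fin n ⊕ Fin n) (Fin n ⊕ Fin n) k :=
      Matrix.fromBlocks 0 1 1 0
    ∀ g : Matrix (Fin n ⊕ Fin n) (Fin n ⊕ Fin n) (LaurentPolynomial k),
      g.det = 1 → (∀ x y, β (g.mulVec x) (g.mulVec y) = β x y) →
      (ε.mapMatrix g).det = 1 ∧ (ε.mapMatrix g)ᵀ * J * ε.mapMatrix g = J := by
  intro B β J g hdet hβ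
  -- ε sends every T m to 1
  have hεTm : ∀ m : ℤ, ε (T m : LaurentPolynomial k) = 1 := by
    have hneg : ε (T (-1) : LaurentPolynomial k) = 1 := by
      have h1 : (T 1 : LaurentPolynomial k) * T (-1) = 1 := by
        rw [← T_add]; norm_num [T_zero]
      have := congrArg ε h1
      rw [_root_.map_mul, hεT, one_mul, _root_.map_one] at this
      exact this
    intro m
    induction m using Int.induction_on with
    | zero => simp [T_zero]
    | succ i ih => rw [T_add, _root_.map_mul, ih, hεT, one_mul]
    | pred i ih => rw [show (-(i:ℤ) - 1) = (-(i:ℤ)) + (-1) by ring, T_add, _root_.map_mul, ih, hneg,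
        one_mul]
  -- ε ∘ σ = ε
  have hεσ : ∀ p : LaurentPolynomial k, ε (σ p) = ε p := by
    intro p
    induction p using LaurentPolynomial.induction_on' with
    | add p q hp hq => rw [map_add, map_add, map_add, hp, hq]
    | C_mul_T m a =>
        simp only [_root_.map_mul, hσC, hσT, hεTm]
  -- the key matrix identity over the Laurent ring
  have key : gᵀ * B * σ.mapMatrix g = B := by
    refine Matrix.ext fun a b => ?_
    have h := hβ (Pi.single a 1) (Pi.single b 1)
    have hL : g.mulVec (Pi.single a 1) = fun i => g i a := by
      ext i; simp [mulVec_single]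
    have hR : g.mulVec (Pi.single b 1) = fun j => g j b := by
      ext j; simp [mulVec_single]
    rw [hL, hR] at h
    have hrhs : β (Pi.single a 1) (Pi.single b 1) = B a b := by
      simp only [β]
      rw [Finset.sum_eq_single a]
      · rw [Finset.sum_eq_single b]
        · simp
        · intro j _ hj; simp [Pi.single_eq_of_ne hj]
        · simp
      · intro i _ hi
        simp [Pi.single_eq_of_ne hi]
      · simp
    rw [hrhs] at h
    calc (gᵀ * B * σ.mapMatrix g) a b
        = ∑ j, (∑ i, g i a * B i j) * σ (g j b) := by
          simp [Matrix.mul_apply, Matrix.transpose_apply, RingHom.mapMatrix_apply,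
            Matrix.map_apply]
      _ = ∑ j, ∑ i, g i a * B i j * σ (g j b) :=
          Finset.sum_congr rfl fun j _ => Finset.sum_mul _ _ _
      _ = ∑ i, ∑ j, g i a * B i j * σ (g j b) := Finset.sum_comm
      _ = B a b := h
  constructor
  · rw [← RingHom.map_det, hdet, _root_.map_one]
  · have := congrArg (fun M => ε.mapMatrix M) key
    simp only [RingHom.mapMatrix_apply] at this
    rw [Matrix.map_mul, Matrix.map_mul] at this
    have hmapσ : (g.map ⇑σ).map ⇑ε = g.map ⇑ε := by
      ext i j; simp [Matrix.map_apply, hεσ]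
    have hmapB : B.map ε = J := by
      ext i j
      rcases i with i | i <;> rcases j with j | j <;>
        simp [B, J, Matrix.map_apply, Matrix.fromBlocks, Matrix.one_apply, hεT,
          apply_ite ε]
    have hmapT : (gᵀ).map ε = (g.map ε)ᵀ := by
      ext i j; simp [Matrix.map_apply]
    rw [hmapσ, hmapB, hmapT] at this
    simpa [RingHom.mapMatrix_apply] using this
end
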